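/- Multivariate sharpness: let X ∈ ℝ^p be square-integrable with E[XX'] nonsingular and Y square-integrable, and let d ∈ ℝ^p \ {0}. Then sup over couplings (X̃,Ỹ) of d'E[XX']^{-1}E[X̃Ỹ] equals E[F_{X_d}^{-1}(U) F_Y^{-1}(U)] where X_d := d'E[XX']^{-1}X and U ~ Uniform[0,1]; i.e., knowledge of the joint distribution of X beyond the law of the scalar X_d carries no additional information for this supremum. -/

import Mathlib

open MeasureTheory Set Filter ProbabilityTheory

/-- Generalized inverse (quantile function) of the cdf of a measure `μ` on `ℝ`. -/
noncomputable def qf (μ : Measure ℝ) (t : ℝ) : ℝ :=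
  sInf {x | t ≤ (μ (Set.Iic x)).toReal}

/-- Second-moment matrix `E[X Xᵀ]` of a distribution `μ` on `ℝ^p`. -/
noncomputable def momMat {p : ℕ} (μ : Measure (Fin p → ℝ)) : Matrix (Fin p) (Fin p) ℝ :=
  Matrix.of fun i j => ∫ x, x i * x j ∂μ

set_option linter.unusedSectionVars false
set_option maxHeartbeats 1000000

section QF
variable (μ : Measure ℝ) [IsProbabilityMeasure μ]

lemma qf_eq (t : ℝ) : qf μ t = sInf {x | t ≤ cdf μ x} := by
  simp only [qf, cdf_eq_real, measureReal_def]

lemma qf_set_nonempty {t : ℝ} (ht1 : t < 1) : {x | t ≤ cdf μ x}.Nonempty := by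
  obtain ⟨x, hx⟩ := ((tendsto_cdf_atTop μ).eventually (eventually_gt_nhds ht1)).exists
  exact ⟨x, hx.le⟩

lemma qf_set_bddBelow {t : ℝ} (ht0 : 0 < t) : BddBelow {x | t ≤ cdf μ x} := by
  obtain ⟨y, hy⟩ := ((tendsto_cdf_atBot μ).eventually (eventually_lt_nhds ht0)).exists
  refine ⟨y, fun z hz => ?_⟩
  by_contra h
  push_neg at h
  exact absurd (hz.trans (monotone_cdf μ h.le)) (not_le.2 hy)

lemma le_cdf_qf {t : ℝ} (ht0 : 0 < t) (ht1 : t < 1) : t ≤ cdf μ (qf μ t) := by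
  rw [qf_eq]
  set S := {x | t ≤ cdf μ x} with hS
  have hne := qf_set_nonempty μ ht1
  have hbd := qf_set_bddBelow μ ht0
  have h1 : ∀ x ∈ Ioi (sInf S), t ≤ cdf μ x := by
    intro x hx
    obtain ⟨s, hsS, hs⟩ := (csInf_lt_iff hbd hne).mp hx
    exact hsS.trans (monotone_cdf μ hs.le)
  have h2 : Tendsto (cdf μ) (nhdsWithin (sInf S) (Ioi (sInf S))) (nhds (cdf μ (sInf S))) :=
    ((cdf μ).right_continuous (sInf S)).mono_left (nhdsWithin_mono _ Ioi_subset_Ici_self)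
  exact ge_of_tendsto h2 (eventually_mem_nhdsWithin.mono h1)

lemma qf_le_iff {t x : ℝ} (ht0 : 0 < t) (ht1 : t < 1) :
    qf μ t ≤ x ↔ t ≤ cdf μ x := by
  constructor
  · intro h
    exact (le_cdf_qf μ ht0 ht1).trans (monotone_cdf μ h)
  · intro h
    rw [qf_eq]
    exact csInf_le (qf_set_bddBelow μ ht0) h

lemma lt_qf_iff {t x : ℝ} (ht0 : 0 < t) (ht1 : t < 1) :
    x < qf μ t ↔ cdf μ x < t := by
  rw [← not_le, ← not_le, qf_le_iff μ ht0 ht1]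

lemma qf_monotoneOn : MonotoneOn (qf μ) (Ioo 0 1) := by
  intro s hs t ht hst
  rw [qf_le_iff μ hs.1 hs.2]
  exact hst.trans (le_cdf_qf μ ht.1 ht.2)

lemma qf_aemeasurable : AEMeasurable (qf μ) (volume.restrict (Ioo 0 1)) :=
  aemeasurable_restrict_of_monotoneOn measurableSet_Ioo (qf_monotoneOn μ)

lemma map_qf : (volume.restrict (Ioo 0 1)).map (qf μ) = μ := by
  haveI : IsFiniteMeasure (volume.restrict (Ioo (0:ℝ) 1)) :=
    ⟨by simp [Measure.restrict_apply_univ]⟩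
  refine Measure.ext_of_Iic _ _ (fun x => ?_)
  rw [Measure.map_apply_of_aemeasurable (qf_aemeasurable μ) measurableSet_Iic,
    Measure.restrict_apply' measurableSet_Ioo]
  have hset : qf μ ⁻¹' Iic x ∩ Ioo 0 1 = Ioc 0 (cdf μ x) ∩ Ioo 0 1 := by
    ext t
    simp only [mem_inter_iff, mem_preimage, mem_Iic, mem_Ioo, mem_Ioc]
    constructor
    · rintro ⟨h, h0, h1⟩
      exact ⟨⟨h0, (qf_le_iff μ h0 h1).mp h⟩, h0, h1⟩
    · rintro ⟨⟨h0, h⟩, _, h1⟩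
      exact ⟨(qf_le_iff μ h0 h1).mpr h, h0, h1⟩
  rw [hset, ← ofReal_cdf μ x]
  rcases lt_or_ge (cdf μ x) 1 with h | h
  · rw [inter_eq_left.mpr ?_, Real.volume_Ioc, sub_zero]
    intro t ht
    exact ⟨ht.1, lt_of_le_of_lt ht.2 h⟩
  · have h1 : cdf μ x = 1 := le_antisymm (cdf_le_one μ x) h
    rw [h1, inter_eq_right.mpr Ioo_subset_Ioc_self, Real.volume_Ioo, sub_zero]

end QF

noncomputable def hh (a s : ℝ) : ℝ := (if s < a then 1 else 0) - (if s < 0 then 1 else 0)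

lemma hh_of_nonneg {a : ℝ} (ha : 0 ≤ a) : hh a = (Ico (0:ℝ) a).indicator 1 := by
  funext s
  rcases lt_or_ge s a with h1 | h1 <;> rcases lt_or_ge s 0 with h2 | h2
  · simp [hh, indicator_apply, mem_Ico, h1, h2, not_le.mpr h2]
  · simp [hh, indicator_apply, mem_Ico, h1, h2, not_lt.mpr h2]
  · linarith
  · simp [hh, indicator_apply, mem_Ico, not_lt.mpr h1, not_lt.mpr h2]

lemma hh_of_neg {a : ℝ} (ha : a < 0) : hh a = fun s => -((Ico a (0:ℝ)).indicator 1 s) := by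
  funext s
  rcases lt_or_ge s a with h1 | h1 <;> rcases lt_or_ge s 0 with h2 | h2
  · simp [hh, indicator_apply, mem_Ico, h1, h2, not_le.mpr h1]
  · linarith
  · simp [hh, indicator_apply, mem_Ico, not_lt.mpr h1, h1, h2]
  · simp [hh, indicator_apply, mem_Ico, not_lt.mpr h1, not_lt.mpr h2]

lemma hh_measurable : Measurable (fun p : ℝ × ℝ => hh p.1 p.2) := by
  unfold hh
  exact ((measurable_const.ite (measurableSet_lt measurable_snd measurable_fst)
    measurable_const).sub
    (measurable_const.ite (measurableSet_lt measurable_snd measurable_const) measurable_const))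

lemma hh_integrable (a : ℝ) : Integrable (hh a) volume := by
  rcases le_or_gt 0 a with h | h
  · rw [hh_of_nonneg h]
    exact (integrable_indicator_iff measurableSet_Ico).mpr
      ((integrableOn_const_iff).mpr (Or.inr (by simp [Real.volume_Ico])))
  · rw [hh_of_neg h]
    refine Integrable.neg ?_
    exact (integrable_indicator_iff measurableSet_Ico).mpr
      ((integrableOn_const_iff).mpr (Or.inr (by simp [Real.volume_Ico])))

lemma hh_integral (a : ℝ) : ∫ s, hh a s = a := by
  rcases le_or_gt 0 a with h | h
  · rw [hh_of_nonneg h, integral_indicator_one measurableSet_Ico]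
    simp [Real.volume_Ico, ENNReal.toReal_ofReal h, h]
  · rw [hh_of_neg h]
    rw [integral_neg, integral_indicator_one measurableSet_Ico]
    simp only [measureReal_def, Real.volume_Ico, sub_neg_eq_add, zero_sub]
    rw [ENNReal.toReal_ofReal (by linarith)]
    ring

lemma hh_abs_integral (a : ℝ) : ∫ s, |hh a s| = |a| := by
  rcases le_or_gt 0 a with h | h
  · have : (fun s => |hh a s|) = hh a := by
      funext s
      rw [hh_of_nonneg h]
      simp only [indicator_apply, Pi.one_apply]
      split_ifs <;> simp
    rw [this, hh_integral, abs_of_nonneg h]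
  · have : (fun s => |hh a s|) = fun s => -(hh a s) := by
      funext s
      rw [hh_of_neg h]
      simp only [indicator_apply, Pi.one_apply]
      split_ifs <;> simp
    rw [this, integral_neg, hh_integral, abs_of_neg h]

/-- products of functions of the marginals with square-integrable marginals are integrable. -/
lemma integrable_mul_marginal {A B : Type*} [MeasurableSpace A] [MeasurableSpace B]
    (π : Measure (A × B)) [IsFiniteMeasure π] {f : A → ℝ} {g : B → ℝ}
    (hf : Measurable f) (hg : Measurable g)
    (hf2 : Integrable (fun a => f a ^ 2) π.fst) (hg2 : Integrable (fun b => g b ^ 2) π.snd) :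
    Integrable (fun q => f q.1 * g q.2) π := by
  have hf2' : Integrable (fun q : A × B => f q.1 ^ 2) π := by
    rw [Measure.fst] at hf2
    exact (integrable_map_measure ((hf.pow_const 2).aestronglyMeasurable)
      measurable_fst.aemeasurable).mp hf2
  have hg2' : Integrable (fun q : A × B => g q.2 ^ 2) π := by
    rw [Measure.snd] at hg2
    exact (integrable_map_measure ((hg.pow_const 2).aestronglyMeasurable)
      measurable_snd.aemeasurable).mp hg2
  refine Integrable.mono' ((hf2'.add hg2').div_const 2)
    (((hf.comp measurable_fst).mul (hg.comp measurable_snd)).aestronglyMeasurable)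
    (ae_of_all _ fun q => ?_)
  rw [Real.norm_eq_abs, abs_mul]
  simp only [Pi.add_apply]
  nlinarith [sq_nonneg (|f q.1| - |g q.2|), sq_abs (f q.1), sq_abs (g q.2),
    abs_nonneg (f q.1), abs_nonneg (g q.2)]

section Comon
noncomputable def comon (α β : Measure ℝ) : Measure (ℝ × ℝ) :=
  (volume.restrict (Ioo 0 1)).map (fun t => (qf α t, qf β t))

variable (α β : Measure ℝ) [IsProbabilityMeasure α] [IsProbabilityMeasure β]

lemma comon_aemeas : AEMeasurable (fun t => (qf α t, qf β t)) (volume.restrict (Ioo 0 1)) :=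
  (qf_aemeasurable α).prodMk (qf_aemeasurable β)

instance comon_prob : IsProbabilityMeasure (comon α β) := by
  constructor
  rw [comon, Measure.map_apply_of_aemeasurable (comon_aemeas α β) MeasurableSet.univ]
  simp [Measure.restrict_apply_univ]

lemma comon_fst : (comon α β).fst = α := by
  rw [Measure.fst, comon,
    AEMeasurable.map_map_of_aemeasurable measurable_fst.aemeasurable (comon_aemeas α β)]
  exact map_qf α

lemma comon_snd : (comon α β).snd = β := by
  rw [Measure.snd, comon,
    AEMeasurable.map_map_of_aemeasurable measurable_snd.aemeasurable (comon_aemeas α β)]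
  exact map_qf β

lemma comon_surv (x y : ℝ) :
    comon α β (Ioi x ×ˢ Ioi y) = min (α (Ioi x)) (β (Ioi y)) := by
  rw [comon, Measure.map_apply_of_aemeasurable (comon_aemeas α β)
    (measurableSet_Ioi.prod measurableSet_Ioi), Measure.restrict_apply' measurableSet_Ioo]
  have hset : (fun t => (qf α t, qf β t)) ⁻¹' (Ioi x ×ˢ Ioi y) ∩ Ioo 0 1
      = Ioo (max (cdf α x) (cdf β y)) 1 := by
    ext t
    simp only [mem_inter_iff, mem_preimage, mem_prod, mem_Ioi, mem_Ioo, max_lt_iff]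
    constructor
    · rintro ⟨⟨h1, h2⟩, h0, ht1⟩
      exact ⟨⟨(lt_qf_iff α h0 ht1).mp h1, (lt_qf_iff β h0 ht1).mp h2⟩, ht1⟩
    · rintro ⟨⟨h1, h2⟩, ht1⟩
      have h0 : 0 < t := lt_of_le_of_lt (cdf_nonneg α x) h1
      exact ⟨⟨(lt_qf_iff α h0 ht1).mpr h1, (lt_qf_iff β h0 ht1).mpr h2⟩, h0, ht1⟩
  rw [hset, Real.volume_Ioo]
  have hIoi : ∀ (μ : Measure ℝ) [IsProbabilityMeasure μ], ∀ z : ℝ,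
      μ (Ioi z) = ENNReal.ofReal (1 - cdf μ z) := by
    intro μ _ z
    have : Ioi z = (Iic z)ᶜ := by simp
    rw [this, measure_compl measurableSet_Iic (measure_ne_top μ _), ← ofReal_cdf μ z,
      measure_univ, ← ENNReal.ofReal_one, ← ENNReal.ofReal_sub _ (cdf_nonneg μ z)]
  rw [hIoi α x, hIoi β y]
  rcases le_total (cdf α x) (cdf β y) with h | h
  · rw [max_eq_right h, min_eq_right (ENNReal.ofReal_le_ofReal (by linarith))]
  · rw [max_eq_left h, min_eq_left (ENNReal.ofReal_le_ofReal (by linarith))]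

lemma comon_integral (f : ℝ × ℝ → ℝ) (hf : Measurable f) :
    ∫ q, f q ∂(comon α β) = ∫ t in Ioo (0:ℝ) 1, f (qf α t, qf β t) := by
  exact integral_map (comon_aemeas α β) hf.aestronglyMeasurable

end Comon

section HL

variable {α β : Measure ℝ} [IsProbabilityMeasure α] [IsProbabilityMeasure β]

noncomputable abbrev PP : Measure (ℝ × ℝ) := (volume : Measure ℝ).prod volume
local notation "P" => PP

lemma hl_K_repr (π : Measure (ℝ × ℝ)) [IsProbabilityMeasure π]
    (hfst : π.fst = α) (hsnd : π.snd = β) (s t : ℝ) :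
    ∫ q, hh q.1 s * hh q.2 t ∂π =
      (π (Ioi s ×ˢ Ioi t)).toReal
        - (α (Ioi s)).toReal * (if t < 0 then 1 else 0)
        - (if s < 0 then 1 else 0) * (β (Ioi t)).toReal
        + (if s < 0 then 1 else 0) * (if t < 0 then 1 else 0) := by
  have hSind : (fun q : ℝ × ℝ => (if s < q.1 then (1:ℝ) else 0) * (if t < q.2 then 1 else 0))
      = (Ioi s ×ˢ Ioi t).indicator 1 := by
    funext q
    by_cases h1 : s < q.1 <;> by_cases h2 : t < q.2 <;>
      simp [indicator_apply, mem_prod, mem_Ioi, h1, h2]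
  have hfind : (fun q : ℝ × ℝ => (if s < q.1 then (1:ℝ) else 0))
      = (Prod.fst ⁻¹' Ioi s : Set (ℝ × ℝ)).indicator 1 := by
    funext q
    by_cases h : s < q.1 <;> simp [indicator_apply, mem_preimage, h]
  have hgind : (fun q : ℝ × ℝ => (if t < q.2 then (1:ℝ) else 0))
      = (Prod.snd ⁻¹' Ioi t : Set (ℝ × ℝ)).indicator 1 := by
    funext q
    by_cases h : t < q.2 <;> simp [indicator_apply, mem_preimage, h]
  have hSmeas : MeasurableSet (Ioi s ×ˢ Ioi t : Set (ℝ × ℝ)) :=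
    measurableSet_Ioi.prod measurableSet_Ioi
  have I1 : Integrable (fun q : ℝ × ℝ => (if s < q.1 then (1:ℝ) else 0)
      * (if t < q.2 then 1 else 0)) π := by
    rw [hSind]; exact (integrable_const (1:ℝ)).indicator hSmeas
  have I2 : Integrable (fun q : ℝ × ℝ => (if s < q.1 then (1:ℝ) else 0)) π := by
    rw [hfind]; exact (integrable_const (1:ℝ)).indicator (measurable_fst measurableSet_Ioi)
  have I3 : Integrable (fun q : ℝ × ℝ => (if t < q.2 then (1:ℝ) else 0)) π := by
    rw [hgind]; exact (integrable_const (1:ℝ)).indicator (measurable_snd measurableSet_Ioi)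
  have J2 : Integrable (fun q : ℝ × ℝ =>
      (if s < q.1 then (1:ℝ) else 0) * (if t < 0 then 1 else 0)) π := I2.mul_const _
  have J3 : Integrable (fun q : ℝ × ℝ =>
      (if s < 0 then (1:ℝ) else 0) * (if t < q.2 then 1 else 0)) π := I3.const_mul _
  have J12 : Integrable (fun q : ℝ × ℝ =>
      (if s < q.1 then (1:ℝ) else 0) * (if t < q.2 then 1 else 0)
        - (if s < q.1 then (1:ℝ) else 0) * (if t < 0 then 1 else 0)) π := by
    exact I1.sub J2
  have J123 : Integrable (fun q : ℝ × ℝ =>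
      (if s < q.1 then (1:ℝ) else 0) * (if t < q.2 then 1 else 0)
        - (if s < q.1 then (1:ℝ) else 0) * (if t < 0 then 1 else 0)
        - (if s < 0 then (1:ℝ) else 0) * (if t < q.2 then 1 else 0)) π := by
    exact J12.sub J3
  have key : (fun q : ℝ × ℝ => hh q.1 s * hh q.2 t)
      = fun q => ((if s < q.1 then (1:ℝ) else 0) * (if t < q.2 then 1 else 0)
          - (if s < q.1 then (1:ℝ) else 0) * (if t < 0 then 1 else 0)
          - (if s < 0 then (1:ℝ) else 0) * (if t < q.2 then 1 else 0))
          + (if s < 0 then (1:ℝ) else 0) * (if t < 0 then 1 else 0) := by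
    funext q; simp only [hh]; ring
  rw [key, integral_add J123 (integrable_const _), integral_sub J12 J3,
    integral_sub I1 J2, integral_mul_const, integral_const_mul, integral_const]
  have e1 : ∫ q, (if s < q.1 then (1:ℝ) else 0) * (if t < q.2 then 1 else 0) ∂π
      = (π (Ioi s ×ˢ Ioi t)).toReal := by
    rw [hSind, integral_indicator_one hSmeas, measureReal_def]
  have e2 : ∫ q, (if s < q.1 then (1:ℝ) else 0) ∂π = (α (Ioi s)).toReal := by
    rw [hfind, integral_indicator_one (measurable_fst measurableSet_Ioi), measureReal_def,
      ← Measure.fst_apply measurableSet_Ioi, hfst]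
  have e3 : ∫ q, (if t < q.2 then (1:ℝ) else 0) ∂π = (β (Ioi t)).toReal := by
    rw [hgind, integral_indicator_one (measurable_snd measurableSet_Ioi), measureReal_def,
      ← Measure.snd_apply measurableSet_Ioi, hsnd]
  rw [e1, e2, e3]
  simp [measure_univ]

lemma hl_integrable_F (π : Measure (ℝ × ℝ)) [IsProbabilityMeasure π]
    (hfst : π.fst = α) (hsnd : π.snd = β)
    (hα2 : Integrable (fun x => x ^ 2) α) (hβ2 : Integrable (fun y => y ^ 2) β) :
    Integrable (fun z : (ℝ × ℝ) × (ℝ × ℝ) => hh z.1.1 z.2.1 * hh z.1.2 z.2.2) (π.prod P) := by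
  have measF : Measurable (fun z : (ℝ × ℝ) × (ℝ × ℝ) => hh z.1.1 z.2.1 * hh z.1.2 z.2.2) := by
    exact (hh_measurable.comp ((measurable_fst.fst).prodMk (measurable_snd.fst))).mul
      (hh_measurable.comp ((measurable_fst.snd).prodMk (measurable_snd.snd)))
  rw [integrable_prod_iff measF.aestronglyMeasurable]
  constructor
  · exact Eventually.of_forall fun q => (hh_integrable q.1).mul_prod (hh_integrable q.2)
  · have hnorm : (fun q : ℝ × ℝ => ∫ st : ℝ × ℝ, ‖hh q.1 st.1 * hh q.2 st.2‖ ∂P)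
        = fun q => |q.1| * |q.2| := by
      funext q
      simp_rw [norm_mul, Real.norm_eq_abs]
      rw [integral_prod_mul (fun u => |hh q.1 u|) (fun u => |hh q.2 u|),
        hh_abs_integral, hh_abs_integral]
    rw [hnorm]
    have : Integrable (fun q : ℝ × ℝ => |q.1| * |q.2|) π := by
      refine integrable_mul_marginal π (f := fun x : ℝ => |x|) (g := fun x : ℝ => |x|) measurable_id.abs measurable_id.abs ?_ ?_
      · rw [hfst]; simpa [sq_abs] using hα2
      · rw [hsnd]; simpa [sq_abs] using hβ2
    exact this



lemma hl_K_integrable (π : Measure (ℝ × ℝ)) [IsProbabilityMeasure π]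
    (hfst : π.fst = α) (hsnd : π.snd = β)
    (hα2 : Integrable (fun x => x ^ 2) α) (hβ2 : Integrable (fun y => y ^ 2) β) :
    Integrable (fun st : ℝ × ℝ => ∫ q, hh q.1 st.1 * hh q.2 st.2 ∂π) P := by
  exact (hl_integrable_F π hfst hsnd hα2 hβ2).integral_prod_right

lemma hl_K_integral (π : Measure (ℝ × ℝ)) [IsProbabilityMeasure π]
    (hfst : π.fst = α) (hsnd : π.snd = β)
    (hα2 : Integrable (fun x => x ^ 2) α) (hβ2 : Integrable (fun y => y ^ 2) β) :
    ∫ st : ℝ × ℝ, (∫ q, hh q.1 st.1 * hh q.2 st.2 ∂π) ∂P = ∫ q, q.1 * q.2 ∂π := by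
  have hF := hl_integrable_F π hfst hsnd hα2 hβ2
  have swap : ∫ st : ℝ × ℝ, (∫ q, hh q.1 st.1 * hh q.2 st.2 ∂π) ∂P
      = ∫ q : ℝ × ℝ, (∫ st : ℝ × ℝ, hh q.1 st.1 * hh q.2 st.2 ∂P) ∂π := by
    exact (integral_integral_swap (f := fun (q : ℝ × ℝ) (st : ℝ × ℝ) =>
      hh q.1 st.1 * hh q.2 st.2) hF).symm
  rw [swap]
  congr 1
  funext q
  rw [show (fun st : ℝ × ℝ => hh q.1 st.1 * hh q.2 st.2)
    = fun st : ℝ × ℝ => (fun u => hh q.1 u) st.1 * (fun u => hh q.2 u) st.2 from rfl,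
    integral_prod_mul, hh_integral, hh_integral]

lemma hl_main (π : Measure (ℝ × ℝ)) [IsProbabilityMeasure π]
    (hfst : π.fst = α) (hsnd : π.snd = β)
    (hα2 : Integrable (fun x => x ^ 2) α) (hβ2 : Integrable (fun y => y ^ 2) β) :
    ∫ q, q.1 * q.2 ∂π ≤ ∫ q, q.1 * q.2 ∂(comon α β) := by
  haveI : IsProbabilityMeasure (comon α β) := comon_prob α β
  rw [← hl_K_integral π hfst hsnd hα2 hβ2,
    ← hl_K_integral (comon α β) (comon_fst α β) (comon_snd α β) hα2 hβ2]
  refine integral_mono (hl_K_integrable π hfst hsnd hα2 hβ2)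
    (hl_K_integrable (comon α β) (comon_fst α β) (comon_snd α β) hα2 hβ2) fun st => ?_
  rw [hl_K_repr π hfst hsnd st.1 st.2,
    hl_K_repr (comon α β) (comon_fst α β) (comon_snd α β) st.1 st.2]
  have hle : (π (Ioi st.1 ×ˢ Ioi st.2)).toReal ≤ (comon α β (Ioi st.1 ×ˢ Ioi st.2)).toReal := by
    rw [comon_surv α β st.1 st.2]
    refine ENNReal.toReal_mono
      (ne_of_lt (lt_of_le_of_lt (min_le_left _ _) (measure_lt_top α _))) ?_
    refine le_min ?_ ?_
    · rw [← hfst, Measure.fst_apply measurableSet_Ioi]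
      exact measure_mono fun q hq => hq.1
    · rw [← hsnd, Measure.snd_apply measurableSet_Ioi]
      exact measure_mono fun q hq => hq.2
  linarith

end HL

section glue

variable {p : ℕ}

lemma dot_measurable (c : Fin p → ℝ) :
    Measurable (fun x : Fin p → ℝ => dotProduct c x) := by
  unfold dotProduct
  exact Finset.measurable_sum _ (fun j _ => (measurable_pi_apply j).const_mul _)

lemma dot_abs_le (c : Fin p → ℝ) (x : Fin p → ℝ) :
    |dotProduct c x| ≤ (∑ j, |c j|) * ‖x‖ := by
  unfold dotProduct
  calc |∑ j, c j * x j| ≤ ∑ j, |c j * x j| := Finset.abs_sum_le_sum_abs _ _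
    _ ≤ ∑ j, |c j| * ‖x‖ := by
        refine Finset.sum_le_sum fun j _ => ?_
        rw [abs_mul]
        exact mul_le_mul_of_nonneg_left
          ((Real.norm_eq_abs (x j)) ▸ norm_le_pi_norm x j) (abs_nonneg _)
    _ = (∑ j, |c j|) * ‖x‖ := (Finset.sum_mul _ _ _).symm

lemma dot_sq_integrable (c : Fin p → ℝ) (μ : Measure (Fin p → ℝ))
    (hμ2 : Integrable (fun x => ‖x‖ ^ 2) μ) :
    Integrable (fun x => (dotProduct c x) ^ 2) μ := by
  refine ((hμ2.const_mul ((∑ j, |c j|) ^ 2)).mono'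
    (((dot_measurable c).pow_const 2).aestronglyMeasurable) (ae_of_all _ fun x => ?_))
  rw [Real.norm_eq_abs, abs_of_nonneg (sq_nonneg _), ← sq_abs]
  calc |dotProduct c x| ^ 2 ≤ ((∑ j, |c j|) * ‖x‖) ^ 2 := by
        refine pow_le_pow_left₀ (abs_nonneg _) (dot_abs_le c x) 2
    _ = (∑ j, |c j|) ^ 2 * ‖x‖ ^ 2 := mul_pow _ _ _

lemma coord_sq_integrable (i : Fin p) (μ : Measure (Fin p → ℝ))
    (hμ2 : Integrable (fun x => ‖x‖ ^ 2) μ) :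
    Integrable (fun x : Fin p → ℝ => (x i) ^ 2) μ := by
  refine hμ2.mono' (((measurable_pi_apply i).pow_const 2).aestronglyMeasurable)
    (ae_of_all _ fun x => ?_)
  rw [Real.norm_eq_abs, abs_of_nonneg (sq_nonneg _), ← sq_abs]
  refine pow_le_pow_left₀ (abs_nonneg _) ((Real.norm_eq_abs (x i)) ▸ norm_le_pi_norm x i) 2

lemma value_rewrite (c : Fin p → ℝ) (π : Measure ((Fin p → ℝ) × ℝ))
    (hint : ∀ i, Integrable (fun q : (Fin p → ℝ) × ℝ => q.1 i * q.2) π) :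
    dotProduct c (fun i => ∫ q, q.1 i * q.2 ∂π)
      = ∫ q, (dotProduct c q.1) * q.2 ∂π := by
  unfold dotProduct
  have h1 : ∀ i : Fin p, c i * ∫ q, q.1 i * q.2 ∂π
      = ∫ q, c i * (q.1 i * q.2) ∂π := fun i => (integral_const_mul _ _).symm
  simp_rw [h1]
  rw [← integral_finset_sum _ (fun i _ => (hint i).const_mul (c i))]
  congr 1
  funext q
  rw [Finset.sum_mul]
  exact Finset.sum_congr rfl fun i _ => by ring

lemma comon_value (α β : Measure ℝ) [IsProbabilityMeasure α] [IsProbabilityMeasure β] :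
    ∫ q, q.1 * q.2 ∂(comon α β) = ∫ t in Ioc (0:ℝ) 1, qf α t * qf β t := by
  rw [comon, integral_map (f := fun q : ℝ × ℝ => q.1 * q.2) (comon_aemeas α β)
    (measurable_fst.mul measurable_snd).aestronglyMeasurable, integral_Ioc_eq_integral_Ioo]

end glue

/-- Multivariate sharpness: the supremum over couplings of `dᵀ E[XXᵀ]⁻¹ E[X̃Ỹ]` equals
`E[F_{X_d}⁻¹(U) F_Y⁻¹(U)]` with `X_d = dᵀE[XXᵀ]⁻¹X`, and it is attained: only the scalar
law of `X_d` matters. -/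
theorem stmt_10 {p : ℕ} (μ : Measure (Fin p → ℝ)) (ν : Measure ℝ)
    [IsProbabilityMeasure μ] [IsProbabilityMeasure ν]
    (hμ2 : Integrable (fun x => ‖x‖ ^ 2) μ) (hν2 : Integrable (fun y => y ^ 2) ν)
    (hM : IsUnit (momMat μ).det) (d : Fin p → ℝ) (hd : d ≠ 0) :
    IsGreatest {v : ℝ | ∃ π : Measure ((Fin p → ℝ) × ℝ),
        π.fst = μ ∧ π.snd = ν ∧ (∀ i, Integrable (fun q => q.1 i * q.2) π) ∧
        v = dotProduct d
              ((momMat μ)⁻¹.mulVec (fun i => ∫ q, q.1 i * q.2 ∂π))}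
      (∫ t in Set.Ioc (0:ℝ) 1,
        qf (Measure.map (fun x => dotProduct d ((momMat μ)⁻¹.mulVec x)) μ) t
          * qf ν t) := by
  classical
  set T : (Fin p → ℝ) → ℝ := fun x => dotProduct d ((momMat μ)⁻¹.mulVec x) with hTdef
  set c : Fin p → ℝ := Matrix.vecMul d (momMat μ)⁻¹ with hcdef
  have hTc : T = fun x => dotProduct c x := by
    funext x
    exact Matrix.dotProduct_mulVec d _ x
  have hTmeas : Measurable T := by rw [hTc]; exact dot_measurable c
  -- the pushforward of μ under T
  set α : Measure ℝ := μ.map T with hαdef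
  haveI : IsProbabilityMeasure α := Measure.isProbabilityMeasure_map hTmeas.aemeasurable
  have hTsq : Integrable (fun x : Fin p → ℝ => T x ^ 2) μ :=
    (dot_sq_integrable c μ hμ2).congr (ae_of_all _ fun x => by simp [hTc])
  have hsqmeas : Measurable (fun x : ℝ => x ^ 2) := by fun_prop
  have hα2 : Integrable (fun x : ℝ => x ^ 2) α := by
    rw [hαdef]
    exact (integrable_map_measure hsqmeas.aestronglyMeasurable
      hTmeas.aemeasurable).mpr hTsq
  -- the common rewriting of the value of a coupling
  have hval : ∀ π : Measure ((Fin p → ℝ) × ℝ),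
      (∀ i, Integrable (fun q : (Fin p → ℝ) × ℝ => q.1 i * q.2) π) →
      dotProduct d ((momMat μ)⁻¹.mulVec (fun i => ∫ q, q.1 i * q.2 ∂π))
        = ∫ q, T q.1 * q.2 ∂π := by
    intro π hint
    rw [Matrix.dotProduct_mulVec, ← hcdef, value_rewrite c π hint]
    simp_rw [hTc]
  constructor
  · -- membership : the optimal coupling
    set ρ : Measure (ℝ × (Fin p → ℝ)) := μ.map (fun x => (T x, x)) with hρdef
    have hpair : Measurable (fun x => (T x, x)) := hTmeas.prodMk measurable_id
    haveI : IsProbabilityMeasure ρ := Measure.isProbabilityMeasure_map hpair.aemeasurable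
    have hρfst : ρ.fst = α := by
      rw [hρdef, Measure.fst, Measure.map_map measurable_fst hpair]
      rfl
    set κ := ρ.condKernel with hκdef
    have hdis : α ⊗ₘ κ = ρ := by rw [← hρfst]; exact ρ.disintegrate κ
    set γ : Measure (ℝ × ℝ) := comon α ν with hγdef
    haveI : IsProbabilityMeasure γ := comon_prob α ν
    set κ' := κ.comap Prod.fst measurable_fst with hκ'def
    set π0 : Measure ((ℝ × ℝ) × (Fin p → ℝ)) := γ ⊗ₘ κ' with hπ0def
    set π : Measure ((Fin p → ℝ) × ℝ) :=
      π0.map (fun r => (r.2, r.1.2)) with hπdef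
    have hmapmeas : Measurable (fun r : (ℝ × ℝ) × (Fin p → ℝ) => (r.2, r.1.2)) :=
      measurable_snd.prodMk (measurable_fst.snd)
    -- snd marginal of π0 is μ
    have hπ0snd : π0.snd = μ := by
      ext s hs
      rw [Measure.snd_apply hs, hπ0def, Measure.compProd_apply (measurable_snd hs)]
      have h1 : ∀ a : ℝ × ℝ, Prod.mk a ⁻¹' (Prod.snd ⁻¹' s) = s := fun a => rfl
      simp_rw [h1, hκ'def, Kernel.comap_apply]
      have h2 : ∫⁻ a : ℝ × ℝ, κ a.1 s ∂γ = ∫⁻ t : ℝ, κ t s ∂α := by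
        rw [← comon_fst α ν, ← hγdef, Measure.fst,
          lintegral_map (Kernel.measurable_coe κ hs) measurable_fst]
      rw [h2]
      have h3 : μ s = ρ.snd s := by
        rw [hρdef, Measure.snd, Measure.map_map measurable_snd hpair]
        have hid : (Prod.snd ∘ fun x : Fin p → ℝ => (T x, x)) = id := rfl
        rw [hid, Measure.map_id]
      rw [h3, ← hdis, Measure.snd_apply hs, Measure.compProd_apply (measurable_snd hs)]
      have h1' : ∀ a : ℝ, Prod.mk a ⁻¹' (Prod.snd ⁻¹' s) = s := fun a => rfl
      simp_rw [h1']
    have hπfst : π.fst = μ := by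
      rw [hπdef, Measure.fst, Measure.map_map measurable_fst hmapmeas, ← hπ0snd]
      rfl
    have hπsnd : π.snd = ν := by
      rw [hπdef, Measure.snd, Measure.map_map measurable_snd hmapmeas]
      have : (Prod.snd ∘ fun r : (ℝ × ℝ) × (Fin p → ℝ) => (r.2, r.1.2))
          = Prod.snd ∘ (Prod.fst : (ℝ × ℝ) × (Fin p → ℝ) → ℝ × ℝ) := rfl
      rw [this, ← Measure.map_map measurable_snd measurable_fst, ← Measure.fst, hπ0def,
        Measure.fst_compProd, ← Measure.snd, hγdef, comon_snd]
    haveI : IsFiniteMeasure π := by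
      constructor
      rw [← Set.preimage_univ (f := Prod.fst), ← Measure.fst_apply MeasurableSet.univ, hπfst]
      exact measure_lt_top μ _
    -- integrability of the coordinates
    have hint : ∀ i, Integrable (fun q : (Fin p → ℝ) × ℝ => q.1 i * q.2) π := by
      intro i
      refine integrable_mul_marginal π (f := fun x => x i) (g := fun y => y)
        (measurable_pi_apply i) measurable_id ?_ ?_
      · rw [hπfst]; exact coord_sq_integrable i μ hμ2
      · rw [hπsnd]; exact hν2
    refine ⟨π, hπfst, hπsnd, hint, ?_⟩
    rw [hval π hint]
    -- compute the value of the coupling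
    have hTq_meas : Measurable (fun q : (Fin p → ℝ) × ℝ => T q.1 * q.2) :=
      (hTmeas.comp measurable_fst).mul measurable_snd
    have step1 : ∫ q, T q.1 * q.2 ∂π = ∫ r, T r.2 * r.1.2 ∂π0 := by
      rw [hπdef, integral_map hmapmeas.aemeasurable hTq_meas.aestronglyMeasurable]
    have hγsnd2 : Integrable (fun a : ℝ × ℝ => (a.2) ^ 2) γ := by
      have : γ.snd = ν := by rw [hγdef]; exact comon_snd α ν
      rw [Measure.snd] at this
      refine (integrable_map_measure ((measurable_id.pow_const 2).aestronglyMeasurable)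
        measurable_snd.aemeasurable |>.mp ?_)
      rw [this]; exact hν2
    have hintπ0 : Integrable (fun r : (ℝ × ℝ) × (Fin p → ℝ) => T r.2 * r.1.2) π0 := by
      have h := integrable_mul_marginal π0 (f := fun a : ℝ × ℝ => a.2) (g := T)
        measurable_snd hTmeas ?hf2 ?hg2
      · refine h.congr (ae_of_all _ fun r => ?_)
        ring
      case hf2 =>
        rw [hπ0def, Measure.fst_compProd]
        exact hγsnd2
      case hg2 =>
        rw [hπ0snd]
        exact hTsq
    have step2 : ∫ r, T r.2 * r.1.2 ∂π0
        = ∫ a : ℝ × ℝ, (∫ x, T x ∂(κ a.1)) * a.2 ∂γ := by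
      rw [hπ0def, Measure.integral_compProd hintπ0]
      congr 1
      funext a
      rw [hκ'def, Kernel.comap_apply]
      exact integral_mul_const a.2 T
    -- concentration of the conditional kernel on the fiber
    have hconc : ∀ᵐ t : ℝ ∂α, ∫ x, T x ∂(κ t) = t := by
      have hE : MeasurableSet {r : ℝ × (Fin p → ℝ) | T r.2 = r.1} :=
        measurableSet_eq_fun (hTmeas.comp measurable_snd) measurable_fst
      have hρE : ρ {r : ℝ × (Fin p → ℝ) | T r.2 = r.1}ᶜ = 0 := by
        rw [hρdef, Measure.map_apply hpair hE.compl]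
        have hemp : ((fun x => (T x, x)) ⁻¹' {r : ℝ × (Fin p → ℝ) | T r.2 = r.1}ᶜ) = ∅ := by
          ext x; simp
        rw [hemp]
        exact measure_empty
      rw [← hdis, Measure.compProd_apply hE.compl] at hρE
      have h0 := (lintegral_eq_zero_iff
        (Kernel.measurable_kernel_prodMk_left hE.compl)).mp hρE
      filter_upwards [h0] with t ht
      rw [Pi.zero_apply] at ht
      have hae : ∀ᵐ x ∂(κ t), T x = t := by
        rw [ae_iff]
        convert ht using 2
        rfl
      rw [integral_congr_ae (hae.mono fun x hx => hx)]
      simp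
    have hconcγ : ∀ᵐ a : ℝ × ℝ ∂γ, ∫ x, T x ∂(κ a.1) = a.1 := by
      rw [ae_iff]
      have hsub : {a : ℝ × ℝ | ¬ (∫ x, T x ∂(κ a.1)) = a.1}
          = Prod.fst ⁻¹' {t : ℝ | ¬ (∫ x, T x ∂(κ t)) = t} := rfl
      rw [hsub]
      refine le_antisymm ?_ zero_le
      refine le_trans (Measure.le_map_apply measurable_fst.aemeasurable _) ?_
      have : γ.map Prod.fst = α := by rw [← Measure.fst, hγdef]; exact comon_fst α ν
      rw [this]
      rw [ae_iff] at hconc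
      exact hconc.le
    have step3 : ∫ a : ℝ × ℝ, (∫ x, T x ∂(κ a.1)) * a.2 ∂γ = ∫ a : ℝ × ℝ, a.1 * a.2 ∂γ :=
      integral_congr_ae (hconcγ.mono fun a ha => by simp only [ha])
    rw [step1, step2, step3, hγdef, comon_value α ν]
  · -- upper bound
    rintro v ⟨π, hfst, hsnd, hint, hv⟩
    haveI : IsProbabilityMeasure π := by
      constructor
      rw [← Set.preimage_univ (f := Prod.fst), ← Measure.fst_apply MeasurableSet.univ, hfst]
      exact measure_univ
    rw [hv, hval π hint]
    set g : (Fin p → ℝ) × ℝ → ℝ × ℝ := fun q => (T q.1, q.2) with hgdef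
    have hgmeas : Measurable g := (hTmeas.comp measurable_fst).prodMk measurable_snd
    set π' : Measure (ℝ × ℝ) := π.map g with hπ'def
    haveI : IsProbabilityMeasure π' := Measure.isProbabilityMeasure_map hgmeas.aemeasurable
    have hπ'fst : π'.fst = α := by
      rw [hπ'def, Measure.fst, Measure.map_map measurable_fst hgmeas]
      have : (Prod.fst ∘ g) = T ∘ Prod.fst := rfl
      rw [this, ← Measure.map_map hTmeas measurable_fst, ← Measure.fst, hfst, hαdef]
    have hπ'snd : π'.snd = ν := by
      rw [hπ'def, Measure.snd, Measure.map_map measurable_snd hgmeas]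
      have : (Prod.snd ∘ g) = (Prod.snd : (Fin p → ℝ) × ℝ → ℝ) := rfl
      rw [this, ← Measure.snd, hsnd]
    have hvmap : ∫ q, T q.1 * q.2 ∂π = ∫ q : ℝ × ℝ, q.1 * q.2 ∂π' := by
      rw [hπ'def, integral_map (f := fun q : ℝ × ℝ => q.1 * q.2) hgmeas.aemeasurable
        (measurable_fst.mul measurable_snd).aestronglyMeasurable]
    rw [hvmap, ← comon_value α ν]
    exact hl_main π' hπ'fst hπ'snd hα2 hν2
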